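/- arXiv:1303.3690 — 2 statements merged into one kernel-verified Lean document; each statement's English description precedes it below -/
import Mathlib

section
/- Upper bound for Bowen entropy of a product via upper capacity entropy: for any Z_1, Z_2 ⊆ X, h^B(Z_1 × Z_2) ≤ h^B(Z_1) + h^U(Z_2), where the product is taken in the product system. -/
open Filter Set
open scoped ENNReal NNReal

namespace BowenProduct

variable {X : Type*} [PseudoMetricSpace X]

/-- The open Bowen ball of order `n` and radius `ε` around `x`:
the ball for the `n`-th Bowen metric `d_n(x,y) = max_{0 ≤ k ≤ n-1} d(T^k x, T^k y)`. -/
def bowenBall (T : X → X) (n : ℕ) (x : X) (ε : ℝ) : Set X :=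
  {y | ∀ k < n, dist (T^[k] x) (T^[k] y) < ε}

/-- The closed Bowen ball of order `n` and radius `ε` around `x`. -/
def bowenClosedBall (T : X → X) (n : ℕ) (x : X) (ε : ℝ) : Set X :=
  {y | ∀ k < n, dist (T^[k] x) (T^[k] y) ≤ ε}

/-- `M^s_{N,ε}(Z)`: the infimum of `Σ_i exp(-s n_i)` over all finite or countable families
`{B_{n_i}(x_i, ε)}` with `x_i ∈ X`, `n_i ≥ N`, covering `Z`. -/
noncomputable def coverSum (T : X → X) (s : ℝ) (N : ℕ) (ε : ℝ) (Z : Set X) : ℝ≥0∞ :=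
  ⨅ (F : Set (X × ℕ)) (_ : F.Countable) (_ : ∀ p ∈ F, N ≤ p.2)
    (_ : Z ⊆ ⋃ p ∈ F, bowenBall T p.2 p.1 ε),
    ∑' p : F, ENNReal.ofReal (Real.exp (-s * ((p : X × ℕ).2 : ℝ)))

/-- `M^s_ε(Z) = lim_{N → ∞} M^s_{N,ε}(Z)`; the limit exists and equals the supremum
since `M^s_{N,ε}(Z)` does not decrease as `N` increases. -/
noncomputable def coverMeasureEps (T : X → X) (s ε : ℝ) (Z : Set X) : ℝ≥0∞ :=
  ⨆ N : ℕ, coverSum T s N ε Z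

/-- `M^s(Z) = lim_{ε → 0} M^s_ε(Z)`; the limit exists and equals the supremum
since `M^s_ε(Z)` does not decrease as `ε` decreases. -/
noncomputable def coverMeasure (T : X → X) (s : ℝ) (Z : Set X) : ℝ≥0∞ :=
  ⨆ (ε : ℝ) (_ : 0 < ε), coverMeasureEps T s ε Z

/-- Bowen's topological entropy `h^B(Z)`: the critical value of `s ≥ 0` at which
`M^s(Z)` jumps from `∞` to `0`, i.e. `inf {s ≥ 0 : M^s(Z) = 0}` (and `∞` if no such `s`). -/
noncomputable def bowenEntropy (T : X → X) (Z : Set X) : ℝ≥0∞ :=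
  ⨅ (s : ℝ≥0) (_ : coverMeasure T (s : ℝ) Z = 0), (s : ℝ≥0∞)

/-- `P^s_{N,ε}(Z)`: the supremum of `Σ_i exp(-s n_i)` over all finite or countable pairwise
disjoint families `{B̄_{n_i}(x_i, ε)}` with `x_i ∈ Z`, `n_i ≥ N`. -/
noncomputable def packingSum (T : X → X) (s : ℝ) (N : ℕ) (ε : ℝ) (Z : Set X) : ℝ≥0∞ :=
  ⨆ (F : Set (X × ℕ)) (_ : F.Countable) (_ : ∀ p ∈ F, p.1 ∈ Z ∧ N ≤ p.2)
    (_ : F.PairwiseDisjoint fun p => bowenClosedBall T p.2 p.1 ε),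
    ∑' p : F, ENNReal.ofReal (Real.exp (-s * ((p : X × ℕ).2 : ℝ)))

/-- `P^s_ε(Z) = lim_{N → ∞} P^s_{N,ε}(Z)`; the limit exists and equals the infimum
since `P^s_{N,ε}(Z)` does not increase as `N` increases. -/
noncomputable def packingPre (T : X → X) (s ε : ℝ) (Z : Set X) : ℝ≥0∞ :=
  ⨅ N : ℕ, packingSum T s N ε Z

/-- `𝒫^s_ε(Z) = inf { Σ_{i=1}^∞ P^s_ε(Z_i) : ∪_{i=1}^∞ Z_i ⊇ Z }`. -/
noncomputable def packingMeasureEps (T : X → X) (s ε : ℝ) (Z : Set X) : ℝ≥0∞ :=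
  ⨅ (Zs : ℕ → Set X) (_ : Z ⊆ ⋃ i, Zs i), ∑' i, packingPre T s ε (Zs i)

/-- `h^P(Z, ε)`: the critical value of `s ≥ 0` at which `𝒫^s_ε(Z)` jumps from `∞` to `0`. -/
noncomputable def packingEntropyEps (T : X → X) (ε : ℝ) (Z : Set X) : ℝ≥0∞ :=
  ⨅ (s : ℝ≥0) (_ : packingMeasureEps T (s : ℝ) ε Z = 0), (s : ℝ≥0∞)

/-- The packing topological entropy `h^P(Z) = lim_{ε → 0} h^P(Z, ε)`; the limit exists and
equals the supremum since `h^P(Z,ε)` increases as `ε` decreases. -/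
noncomputable def packingEntropy (T : X → X) (Z : Set X) : ℝ≥0∞ :=
  ⨆ (ε : ℝ) (_ : 0 < ε), packingEntropyEps T ε Z

/-- `r_n(Z, ε)`: the largest cardinality of an `(n,ε)`-separated subset `E ⊆ Z`, i.e. a set in
which distinct points are at Bowen `d_n`-distance `> ε`. -/
noncomputable def maxSep (T : X → X) (Z : Set X) (n : ℕ) (ε : ℝ) : ℕ :=
  sSup {k : ℕ | ∃ E : Finset X, ↑E ⊆ Z ∧
    (∀ x ∈ E, ∀ y ∈ E, x ≠ y → ∃ i < n, ε < dist (T^[i] x) (T^[i] y)) ∧ E.card = k}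

/-- The upper capacity topological entropy
`h^U(Z) = lim_{ε → 0} limsup_{n → ∞} (1/n) log r_n(Z, ε)`; the limit over `ε` equals the
supremum by monotonicity. -/
noncomputable def upperCapacityEntropy (T : X → X) (Z : Set X) : ℝ≥0∞ :=
  ⨆ (ε : ℝ) (_ : 0 < ε),
    Filter.atTop.limsup fun n : ℕ => ENNReal.ofReal (Real.log (maxSep T Z n ε) / n)

end BowenProduct
section BowenProdAux
open BowenProduct

variable {X : Type*} [MetricSpace X] [CompactSpace X] {T : X → X}

lemma sep_card_bound (hT : Continuous T) (n : ℕ) {ε : ℝ} (hε : 0 < ε) :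
    ∃ C : ℕ, ∀ E : Finset X,
      (∀ x ∈ E, ∀ y ∈ E, x ≠ y → ∃ i < n, ε < dist (T^[i] x) (T^[i] y)) → E.card ≤ C := by
  set Φ : X → (Fin n → X) := fun x i => T^[(i : ℕ)] x with hΦ
  have hΦc : Continuous Φ := continuous_pi fun i => hT.iterate _
  have hcomp : IsCompact (Set.range Φ) := by
    rw [← Set.image_univ]; exact isCompact_univ.image hΦc
  obtain ⟨t, -, htfin, htcov⟩ := finite_cover_balls_of_compact hcomp (half_pos hε)
  have hchoice : ∀ x : X, ∃ c ∈ t, Φ x ∈ Metric.ball c (ε / 2) := by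
    intro x
    have := htcov (Set.mem_range_self x)
    simpa using this
  choose c hc1 hc2 using hchoice
  refine ⟨htfin.toFinset.card, fun E hE => ?_⟩
  refine Finset.card_le_card_of_injOn c (fun x _ => htfin.mem_toFinset.2 (hc1 x)) ?_
  intro x hx y hy hcxy
  by_contra hxy
  obtain ⟨i, hi, hdist⟩ := hE x hx y hy hxy
  have h1 : dist (Φ x) (Φ y) < ε := by
    calc dist (Φ x) (Φ y) ≤ dist (Φ x) (c x) + dist (c x) (Φ y) :=
          dist_triangle (Φ x) (c x) (Φ y)
    _ = dist (Φ x) (c x) + dist (c y) (Φ y) := by rw [hcxy]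
    _ < ε / 2 + ε / 2 := add_lt_add (hc2 x) ((dist_comm (c y) (Φ y)) ▸ hc2 y)
    _ = ε := add_halves ε
  have h2 : dist (T^[i] x) (T^[i] y) ≤ dist (Φ x) (Φ y) :=
    dist_le_pi_dist (Φ x) (Φ y) ⟨i, hi⟩
  linarith

lemma exists_net (hT : Continuous T) (Z : Set X) (n : ℕ) {ε : ℝ} (hε : 0 < ε) :
    ∃ E : Finset X, ↑E ⊆ Z ∧ E.card = maxSep T Z n (ε / 2) ∧
      Z ⊆ ⋃ y ∈ E, bowenBall T n y ε := by
  classical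
  set S := {k : ℕ | ∃ E : Finset X, ↑E ⊆ Z ∧
    (∀ x ∈ E, ∀ y ∈ E, x ≠ y → ∃ i < n, ε / 2 < dist (T^[i] x) (T^[i] y)) ∧ E.card = k} with hS
  obtain ⟨C, hC⟩ := sep_card_bound (T := T) hT n (half_pos hε)
  have hbdd : BddAbove S := ⟨C, fun k ⟨E, _, hsep, hcard⟩ => hcard ▸ hC E hsep⟩
  have hne : S.Nonempty := ⟨0, ∅, by simp⟩
  have hmem : sSup S ∈ S := Nat.sSup_mem hne hbdd
  obtain ⟨E, hEZ, hEsep, hEcard⟩ := hmem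
  refine ⟨E, hEZ, hEcard, ?_⟩
  intro z hz
  by_contra hzn
  simp only [Set.mem_iUnion, not_exists] at hzn
  have hznE : ∀ y ∈ E, ∃ i < n, ε ≤ dist (T^[i] y) (T^[i] z) := by
    intro y hy
    have := hzn y hy
    simp only [bowenBall, Set.mem_setOf_eq, not_forall, not_lt] at this
    obtain ⟨k, hk, hk2⟩ := this
    exact ⟨k, hk, hk2⟩
  have hzE : z ∉ E := by
    intro hzE
    obtain ⟨i, -, hi2⟩ := hznE z hzE
    simp at hi2; linarith
  have hnew : (insert z E).card ∈ S := by
    refine ⟨insert z E, ?_, ?_, rfl⟩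
    · intro x hx
      rcases Finset.mem_insert.1 (by exact_mod_cast hx) with rfl | hx'
      · exact hz
      · exact hEZ hx'
    · intro x hx y hy hxy
      rcases Finset.mem_insert.1 hx with rfl | hx' <;>
        rcases Finset.mem_insert.1 hy with rfl | hy'
      · exact absurd rfl hxy
      · obtain ⟨i, hi, hd⟩ := hznE y hy'
        exact ⟨i, hi, by rw [dist_comm]; linarith⟩
      · obtain ⟨i, hi, hd⟩ := hznE x hx'
        exact ⟨i, hi, by linarith⟩
      · exact hEsep x hx' y hy' hxy
  have := le_csSup hbdd hnew
  rw [Finset.card_insert_of_notMem hzE, hEcard] at this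
  omega


lemma key (hT : Continuous T) (Z₁ Z₂ : Set X) (s t : ℝ≥0)
    (hs : coverMeasure T (s : ℝ) Z₁ = 0)
    (ht : upperCapacityEntropy T Z₂ < (t : ℝ≥0∞)) :
    coverMeasure (Prod.map T T) ((s : ℝ) + (t : ℝ)) (Z₁ ×ˢ Z₂) = 0 := by
  classical
  have ht0 : (0 : ℝ) < (t : ℝ) := by
    have h : (0 : ℝ≥0∞) < (t : ℝ≥0∞) := lt_of_le_of_lt (zero_le) ht
    exact_mod_cast h
  rw [coverMeasure]
  simp only [ENNReal.iSup_eq_zero]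
  intro ε hε
  rw [coverMeasureEps]
  simp only [ENNReal.iSup_eq_zero]
  intro N
  -- the limsup bound for Z₂ at scale ε/2
  have hle : atTop.limsup
      (fun n : ℕ => ENNReal.ofReal (Real.log (maxSep T Z₂ n (ε / 2)) / n)) < (t : ℝ≥0∞) := by
    refine lt_of_le_of_lt ?_ ht
    rw [upperCapacityEntropy]
    exact le_iSup₂ (f := fun (δ : ℝ) (_ : 0 < δ) =>
      atTop.limsup fun n : ℕ => ENNReal.ofReal (Real.log (maxSep T Z₂ n δ) / n))
      (ε / 2) (half_pos hε)
  obtain ⟨N₀, hN₀⟩ := eventually_atTop.1 (eventually_lt_of_limsup_lt hle)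
  set M := max (max N₀ 1) N with hM
  have hcard : ∀ n, M ≤ n → (maxSep T Z₂ n (ε / 2) : ℝ) ≤ Real.exp ((t : ℝ) * n) := by
    intro n hn
    have hn1 : 1 ≤ n := le_trans (le_trans (le_max_right _ _) (le_max_left _ _)) hn
    have hnn0 : (0 : ℝ) < (n : ℝ) := by exact_mod_cast hn1
    set m := maxSep T Z₂ n (ε / 2) with hm
    rcases Nat.eq_zero_or_pos m with hm0 | hm0
    · rw [hm0]; exact_mod_cast (Real.exp_pos _).le
    · have h1 : ENNReal.ofReal (Real.log m / n) < (t : ℝ≥0∞) :=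
        hN₀ n (le_trans (le_trans (le_max_left _ _) (le_max_left _ _)) hn)
      rw [← ENNReal.ofReal_coe_nnreal] at h1
      have h2 : Real.log m / n < (t : ℝ) := (ENNReal.ofReal_lt_ofReal_iff ht0).1 h1
      have h3 : Real.log m < (t : ℝ) * n := by
        rw [div_lt_iff₀ hnn0] at h2; linarith
      have hm1 : (0 : ℝ) < (m : ℝ) := by exact_mod_cast hm0
      calc (m : ℝ) = Real.exp (Real.log m) := (Real.exp_log hm1).symm
        _ ≤ Real.exp ((t : ℝ) * n) := Real.exp_le_exp.2 h3.le
  choose Efun hE1 hE2 hE3 using fun n => exists_net hT Z₂ n hε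
  -- coverSum for Z₁ at level M is zero
  have hZ1 : coverSum T (s : ℝ) M ε Z₁ = 0 := by
    have h1 : coverSum T (s : ℝ) M ε Z₁ ≤ coverMeasure T (s : ℝ) Z₁ := by
      rw [coverMeasure]
      refine le_trans ?_ (le_iSup₂ (f := fun (δ : ℝ) (_ : 0 < δ) =>
        coverMeasureEps T (s : ℝ) δ Z₁) ε hε)
      rw [coverMeasureEps]
      exact le_iSup (fun N' => coverSum T (s : ℝ) N' ε Z₁) M
    rw [hs] at h1
    exact le_antisymm h1 (zero_le)
  refine le_antisymm (le_trans ?_ hZ1.le) (zero_le)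
  -- coverSum prod ≤ coverSum Z₁
  refine le_iInf fun F => le_iInf fun hF1 => le_iInf fun hF2 => le_iInf fun hF3 => ?_
  set G : Set ((X × X) × ℕ) := ⋃ p ∈ F, (fun y => ((p.1, y), p.2)) '' ↑(Efun p.2) with hG
  have hGc : G.Countable := hF1.biUnion fun p _ => ((Efun p.2).finite_toSet.image _).countable
  have hGN : ∀ q ∈ G, N ≤ q.2 := by
    intro q hq
    simp only [hG, Set.mem_iUnion, Set.mem_image] at hq
    obtain ⟨p, hp, y, hy, rfl⟩ := hq
    exact le_trans (le_trans (le_max_right _ _) (hF2 p hp)) le_rfl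
  have hGcov : Z₁ ×ˢ Z₂ ⊆ ⋃ q ∈ G, bowenBall (Prod.map T T) q.2 q.1 ε := by
    rintro ⟨a, b⟩ ⟨ha, hb⟩
    obtain ⟨p, hp, hap⟩ : ∃ p ∈ F, a ∈ bowenBall T p.2 p.1 ε := by
      have h := hF3 ha; simpa using h
    obtain ⟨y, hy, hby⟩ : ∃ y ∈ Efun p.2, b ∈ bowenBall T p.2 y ε := by
      have h := hE3 p.2 hb; simpa using h
    have hmem : ((p.1, y), p.2) ∈ G := by
      simp only [hG, Set.mem_iUnion, Set.mem_image]
      exact ⟨p, hp, y, by simpa using hy, rfl⟩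
    refine Set.mem_biUnion hmem ?_
    intro k hk
    rw [Prod.map_iterate, Prod.dist_eq]
    exact max_lt (hap k hk) (hby k hk)
  refine le_trans (iInf_le_of_le G <| iInf_le_of_le hGc <| iInf_le_of_le hGN <|
    iInf_le_of_le hGcov le_rfl) ?_
  -- the sum estimate
  set c : ℕ → ℝ≥0∞ := fun n => ENNReal.ofReal (Real.exp (-((s : ℝ) + (t : ℝ)) * n)) with hc
  have hsum : ∀ p : F, (∑' _ : {y // y ∈ Efun (p : X × ℕ).2}, c (p : X × ℕ).2)
      ≤ ENNReal.ofReal (Real.exp (-(s : ℝ) * ((p : X × ℕ).2 : ℝ))) := by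
    intro p
    set n := (p : X × ℕ).2 with hn
    have hMn : M ≤ n := hF2 p p.2
    rw [tsum_fintype]
    rw [Finset.sum_const, Finset.card_univ, Fintype.card_coe]
    rw [hE2 n, nsmul_eq_mul, hc]
    rw [← ENNReal.ofReal_natCast, ← ENNReal.ofReal_mul (by positivity)]
    refine ENNReal.ofReal_le_ofReal ?_
    calc (maxSep T Z₂ n (ε / 2) : ℝ) * Real.exp (-((s : ℝ) + (t : ℝ)) * n)
        ≤ Real.exp ((t : ℝ) * n) * Real.exp (-((s : ℝ) + (t : ℝ)) * n) := by
          apply mul_le_mul_of_nonneg_right (hcard n hMn) (Real.exp_pos _).le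
      _ = Real.exp (-(s : ℝ) * n) := by rw [← Real.exp_add]; congr 1; ring
  -- surjection from sigma type onto G
  set f : (Σ p : F, {y // y ∈ Efun (p : X × ℕ).2}) → G := fun i =>
    ⟨(((i.1 : X × ℕ).1, (i.2 : X)), (i.1 : X × ℕ).2), by
      simp only [hG, Set.mem_iUnion, Set.mem_image]
      exact ⟨(i.1 : X × ℕ), i.1.2, (i.2 : X), by simpa using i.2.2, rfl⟩⟩ with hf
  have hfs : Function.Surjective f := by
    rintro ⟨q, hq⟩
    simp only [hG, Set.mem_iUnion, Set.mem_image] at hq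
    obtain ⟨p, hp, y, hy, rfl⟩ := hq
    exact ⟨⟨⟨p, hp⟩, ⟨y, by simpa using hy⟩⟩, rfl⟩
  calc (∑' q : G, ENNReal.ofReal (Real.exp (-((s : ℝ) + (t : ℝ)) * ((q : (X × X) × ℕ).2 : ℝ))))
      = ∑' q : G, c ((q : (X × X) × ℕ).2) := by rfl
    _ ≤ ∑' i : (Σ p : F, {y // y ∈ Efun (p : X × ℕ).2}), c (((f i) : (X × X) × ℕ).2) :=
        ENNReal.tsum_le_tsum_comp_of_surjective hfs _
    _ = ∑' p : F, ∑' _ : {y // y ∈ Efun (p : X × ℕ).2}, c ((p : X × ℕ).2) :=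
        ENNReal.tsum_sigma' _
    _ ≤ ∑' p : F, ENNReal.ofReal (Real.exp (-(s : ℝ) * ((p : X × ℕ).2 : ℝ))) :=
        ENNReal.tsum_le_tsum hsum


end BowenProdAux

/-- Upper bound for Bowen entropy of a product via upper capacity entropy:
`h^B(Z_1 × Z_2) ≤ h^B(Z_1) + h^U(Z_2)`, the product being taken in the product system
`(X × X, ρ, T × T)` with `ρ` the max product metric. -/
theorem BowenProduct.bowenEntropy_prod_le_add_upperCapacity {X : Type*} [MetricSpace X]
    [CompactSpace X] (T : X → X) (hT : Continuous T) (Z₁ Z₂ : Set X) :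
    BowenProduct.bowenEntropy (Prod.map T T) (Z₁ ×ˢ Z₂) ≤
      BowenProduct.bowenEntropy T Z₁ + BowenProduct.upperCapacityEntropy T Z₂ := by
  classical
  have hrhs : BowenProduct.bowenEntropy T Z₁ + BowenProduct.upperCapacityEntropy T Z₂ =
      ⨅ (s : ℝ≥0) (_ : BowenProduct.coverMeasure T (s : ℝ) Z₁ = 0),
        ((s : ℝ≥0∞) + BowenProduct.upperCapacityEntropy T Z₂) := by
    rw [BowenProduct.bowenEntropy, ENNReal.iInf_add]
    exact iInf_congr fun s => ENNReal.iInf_add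
  rw [hrhs]
  refine le_iInf fun s => le_iInf fun hs => ?_
  set u := BowenProduct.upperCapacityEntropy T Z₂ with hu'
  rcases eq_or_ne u ⊤ with hu | hu
  · rw [hu, add_top]; exact le_top
  refine ENNReal.le_of_forall_pos_le_add fun ε hε _ => ?_
  set t : ℝ≥0 := u.toNNReal + ε with htdef
  have hut : u < (t : ℝ≥0∞) := by
    rw [htdef, ENNReal.coe_add, ENNReal.coe_toNNReal hu]
    exact ENNReal.lt_add_right hu (by exact_mod_cast hε.ne')
  have h0 : BowenProduct.coverMeasure (Prod.map T T) (((s + t : ℝ≥0)) : ℝ) (Z₁ ×ˢ Z₂) = 0 := by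
    have hk := key hT Z₁ Z₂ s t hs hut
    rw [NNReal.coe_add]
    exact hk
  have hstep : BowenProduct.bowenEntropy (Prod.map T T) (Z₁ ×ˢ Z₂) ≤ ((s + t : ℝ≥0) : ℝ≥0∞) := by
    rw [BowenProduct.bowenEntropy]
    exact iInf₂_le (s + t) h0
  refine le_trans hstep ?_
  rw [htdef, ENNReal.coe_add, ENNReal.coe_add, ENNReal.coe_toNNReal hu, add_assoc]
end

section
/- Upper bound for Bowen entropy of a product via packing entropy (main theorem, part 2): for any Z_1, Z_2 ⊆ X, h^B(Z_1 × Z_2) ≤ h^B(Z_1) + h^P(Z_2), where the product is taken in the product system. -/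
open Filter Set
open scoped ENNReal NNReal

namespace BowenProduct

variable {X : Type*} [PseudoMetricSpace X]

variable {X : Type*} [PseudoMetricSpace X]

lemma bowenBall_prod (T : X → X) (n : ℕ) (x y : X) (ε : ℝ) :
    bowenBall (Prod.map T T) n (x, y) ε = bowenBall T n x ε ×ˢ bowenBall T n y ε := by
  ext ⟨a, b⟩
  simp only [bowenBall, mem_setOf_eq, Set.mem_prod, Prod.map_iterate, Prod.map_apply,
    Prod.dist_eq, max_lt_iff]
  exact ⟨fun h => ⟨fun k hk => (h k hk).1, fun k hk => (h k hk).2⟩,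
    fun h k hk => ⟨h.1 k hk, h.2 k hk⟩⟩

lemma coverSum_anti (T : X → X) {s s' : ℝ} (hss : s ≤ s') (N : ℕ) (ε : ℝ) (Z : Set X) :
    coverSum T s' N ε Z ≤ coverSum T s N ε Z := by
  refine iInf_mono fun F => iInf_mono fun hc => iInf_mono fun hN => iInf_mono fun hcov => ?_
  refine ENNReal.tsum_le_tsum fun p => ENNReal.ofReal_le_ofReal (Real.exp_le_exp.2 ?_)
  have : (0:ℝ) ≤ ((p : X × ℕ).2 : ℝ) := Nat.cast_nonneg _
  nlinarith

lemma coverMeasure_anti (T : X → X) {s s' : ℝ} (hss : s ≤ s') (Z : Set X) :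
    coverMeasure T s' Z ≤ coverMeasure T s Z := by
  refine iSup_mono fun ε => iSup_mono fun _ => iSup_mono fun N => coverSum_anti T hss N ε Z

lemma packingSum_anti (T : X → X) {s s' : ℝ} (hss : s ≤ s') (N : ℕ) (ε : ℝ) (Z : Set X) :
    packingSum T s' N ε Z ≤ packingSum T s N ε Z := by
  refine iSup_mono fun F => iSup_mono fun hc => iSup_mono fun hN => iSup_mono fun hd => ?_
  refine ENNReal.tsum_le_tsum fun p => ENNReal.ofReal_le_ofReal (Real.exp_le_exp.2 ?_)
  have : (0:ℝ) ≤ ((p : X × ℕ).2 : ℝ) := Nat.cast_nonneg _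
  nlinarith

lemma packingMeasureEps_anti (T : X → X) {s s' : ℝ} (hss : s ≤ s') (ε : ℝ) (Z : Set X) :
    packingMeasureEps T s' ε Z ≤ packingMeasureEps T s ε Z := by
  refine iInf_mono fun Zs => iInf_mono fun hZ => ENNReal.tsum_le_tsum fun i =>
    iInf_mono fun N => packingSum_anti T hss N ε _
variable {X : Type*} [PseudoMetricSpace X]

/-- Separation predicate: pairwise `(n, ε/2)`-separated. -/
def Sep (T : X → X) (n : ℕ) (ε : ℝ) (x y : X) : Prop :=
  ∃ k < n, ε / 2 < dist (T^[k] x) (T^[k] y)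

lemma card_mul_le_packingSum (T : X → X) (t : ℝ) {N n : ℕ} (hn : N ≤ n) {ε : ℝ}
    (hε : 0 < ε) (A : Set X) (E : Finset X) (hEA : ↑E ⊆ A)
    (hsep : (E : Set X).Pairwise (Sep T n ε)) :
    (E.card : ℝ≥0∞) * ENNReal.ofReal (Real.exp (-t * n)) ≤ packingSum T t N (ε / 4) A := by
  classical
  set F : Set (X × ℕ) := ↑(E.image fun y => (y, n)) with hF
  have hinj : Set.InjOn (fun y : X => (y, n)) ↑E := fun a _ b _ h => congrArg Prod.fst h
  have hFc : F.Countable := (E.image _).countable_toSet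
  have hmem : ∀ p ∈ F, p.1 ∈ A ∧ N ≤ p.2 := by
    intro p hp
    simp only [hF, Finset.coe_image, Set.mem_image, Finset.mem_coe] at hp
    obtain ⟨y, hy, rfl⟩ := hp
    exact ⟨hEA hy, hn⟩
  have hdisj : F.PairwiseDisjoint fun p => bowenClosedBall T p.2 p.1 (ε / 4) := by
    intro p hp q hq hpq
    simp only [hF, Finset.coe_image, Set.mem_image, Finset.mem_coe] at hp hq
    obtain ⟨a, ha, rfl⟩ := hp
    obtain ⟨b, hb, rfl⟩ := hq
    have hab : a ≠ b := fun h => hpq (by rw [h])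
    refine Set.disjoint_left.2 fun z hza hzb => ?_
    obtain ⟨k, hk, hsep'⟩ := hsep ha hb hab
    have h1 := hza k hk
    have h2 := hzb k hk
    have := dist_triangle (T^[k] a) (T^[k] z) (T^[k] b)
    rw [dist_comm (T^[k] z)] at this
    simp only [bowenClosedBall, Set.mem_setOf_eq] at h1 h2
    linarith
  have hsum : ∑' p : F, ENNReal.ofReal (Real.exp (-t * ((p : X × ℕ).2 : ℝ)))
      = (E.card : ℝ≥0∞) * ENNReal.ofReal (Real.exp (-t * n)) := by
    rw [hF]
    rw [Finset.tsum_subtype' (E.image fun y => (y, n))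
      (fun p => ENNReal.ofReal (Real.exp (-t * (p.2 : ℝ))))]
    rw [Finset.sum_congr rfl (fun p hp => ?_), Finset.sum_const,
      Finset.card_image_of_injOn hinj, nsmul_eq_mul]
    simp only [Finset.mem_image] at hp
    obtain ⟨y, hy, rfl⟩ := hp
    rfl
  rw [← hsum]
  exact le_iSup_of_le F (le_iSup_of_le hFc (le_iSup_of_le hmem (le_iSup_of_le hdisj le_rfl)))

lemma exists_spanning (T : X → X) (A : Set X) (n : ℕ) {ε : ℝ} (hε : 0 < ε) (B : ℕ)
    (hB : ∀ E : Finset X, ↑E ⊆ A → (E : Set X).Pairwise (Sep T n ε) → E.card ≤ B) :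
    ∃ E : Finset X, ↑E ⊆ A ∧ (E : Set X).Pairwise (Sep T n ε) ∧
      A ⊆ ⋃ y ∈ E, bowenBall T n y ε := by
  classical
  set S : Set ℕ := {k | ∃ E : Finset X, ↑E ⊆ A ∧ (E : Set X).Pairwise (Sep T n ε) ∧ E.card = k}
    with hS
  have hne : S.Nonempty := ⟨0, ∅, by simp⟩
  have hbdd : BddAbove S := ⟨B, fun k ⟨E, hEA, hsep, hcard⟩ => hcard ▸ hB E hEA hsep⟩
  obtain ⟨E, hEA, hsep, hcard⟩ := Nat.sSup_mem hne hbdd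
  refine ⟨E, hEA, hsep, fun z hz => ?_⟩
  by_contra hzc
  simp only [Set.mem_iUnion, bowenBall, Set.mem_setOf_eq, not_exists] at hzc
  have hzE : z ∉ E := fun h => hzc z h (fun k hk => by simp [hε])
  have hzsep : ∀ y ∈ E, Sep T n ε z y := by
    intro y hy
    have := hzc y hy
    push_neg at this
    obtain ⟨k, hk, hd⟩ := this
    exact ⟨k, hk, by rw [dist_comm]; linarith⟩
  have hmem : E.card + 1 ∈ S := by
    refine ⟨insert z E, ?_, ?_, by rw [Finset.card_insert_of_notMem hzE]⟩
    · intro w hw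
      rcases Finset.mem_coe.1 hw with hw'
      rcases Finset.mem_insert.1 hw' with rfl | hw'
      · exact hz
      · exact hEA hw'
    · intro a ha b hb hab
      simp only [Finset.coe_insert, Set.mem_insert_iff, Finset.mem_coe] at ha hb
      rcases ha with rfl | ha
      · rcases hb with rfl | hb
        · exact absurd rfl hab
        · exact hzsep b hb
      · rcases hb with rfl | hb
        · obtain ⟨k, hk, hd⟩ := hzsep a ha
          exact ⟨k, hk, by rw [dist_comm]; linarith⟩
        · exact hsep ha hb hab
  have := le_csSup hbdd hmem
  omega
lemma tsum_finset_coe_eq {α : Type*} (s : Finset α) (f : α → ℝ≥0∞) (c : ℝ≥0∞)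
    (hf : ∀ x ∈ s, f x = c) : ∑' x : (s : Set α), f x = s.card * c := by
  rw [Finset.tsum_subtype' s f, Finset.sum_congr rfl hf, Finset.sum_const, nsmul_eq_mul]

lemma coverSum_prod_eq_zero (T : X → X) (s t : ℝ) {ε : ℝ} (hε : 0 < ε) (Z₁ Z₂ : Set X)
    (h1 : coverMeasure T s Z₁ = 0) (h2 : packingMeasureEps T t (ε / 4) Z₂ = 0) (N : ℕ) :
    coverSum (Prod.map T T) (s + t) N ε (Z₁ ×ˢ Z₂) = 0 := by
  classical
  -- extract a countable cover of Z₂ with small packing premeasures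
  have h2' : packingMeasureEps T t (ε / 4) Z₂ < 1 := by rw [h2]; exact zero_lt_one
  rw [packingMeasureEps] at h2'
  simp only [iInf_lt_iff] at h2'
  obtain ⟨Zs, hZs, hsum⟩ := h2'
  have hPi : ∀ i, packingPre T t (ε / 4) (Zs i) < 1 :=
    fun i => lt_of_le_of_lt (ENNReal.le_tsum i) hsum
  have hMex : ∀ i, ∃ m, packingSum T t m (ε / 4) (Zs i) < 1 := by
    intro i
    have := hPi i
    rw [packingPre] at this
    exact iInf_lt_iff.1 this
  choose M hM using hMex
  -- cardinal bound for separated sets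
  have hcard : ∀ i n, M i ≤ n → ∀ Ef : Finset X, ↑Ef ⊆ Zs i →
      (Ef : Set X).Pairwise (Sep T n ε) → Ef.card ≤ Nat.floor (Real.exp (t * n)) := by
    intro i n hn Ef hEf hsep
    have hle := (card_mul_le_packingSum T t hn hε (Zs i) Ef hEf hsep).trans (hM i).le
    have hexp : (0:ℝ) < Real.exp (-t * n) := Real.exp_pos _
    rw [show ((Ef.card : ℝ≥0∞)) = ENNReal.ofReal (Ef.card : ℝ) by
        rw [ENNReal.ofReal_natCast], ← ENNReal.ofReal_mul (Nat.cast_nonneg _)] at hle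
    have hre : (Ef.card : ℝ) * Real.exp (-t * n) ≤ 1 := by
      rwa [ENNReal.ofReal_le_one] at hle
    have : (Ef.card : ℝ) ≤ Real.exp (t * n) := by
      have h' := mul_le_mul_of_nonneg_right hre (Real.exp_pos (t * n)).le
      rwa [one_mul, mul_assoc, ← Real.exp_add, neg_mul, neg_add_cancel, Real.exp_zero,
        mul_one] at h'
    exact Nat.le_floor this
  -- choose spanning sets
  have hspan : ∀ i n, ∃ Ef : Finset X, M i ≤ n →
      ↑Ef ⊆ Zs i ∧ (Zs i ⊆ ⋃ y ∈ Ef, bowenBall T n y ε) ∧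
        (Ef.card : ℝ≥0∞) * ENNReal.ofReal (Real.exp (-t * n)) ≤ 1 := by
    intro i n
    by_cases hn : M i ≤ n
    · obtain ⟨Ef, hEA, hsep, hcov⟩ :=
        exists_spanning T (Zs i) n hε (Nat.floor (Real.exp (t * n))) (hcard i n hn)
      exact ⟨Ef, fun _ => ⟨hEA, hcov,
        (card_mul_le_packingSum T t hn hε (Zs i) Ef hEA hsep).trans (hM i).le⟩⟩
    · exact ⟨∅, fun h => absurd h hn⟩
  choose E hE using hspan
  -- prove the goal via ≤ δ for every δ > 0
  refine le_antisymm ?_ zero_le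
  refine ENNReal.le_of_forall_pos_le_add fun δ hδ _ => ?_
  rw [zero_add]
  -- small covers of Z₁
  set η : ℕ → ℝ≥0∞ := fun i => (δ : ℝ≥0∞) / 2 * 2⁻¹ ^ i with hη
  have hηpos : ∀ i, 0 < η i := by
    intro i
    apply ENNReal.mul_pos
    · exact (ENNReal.div_pos (by exact_mod_cast hδ.ne') (by norm_num)).ne'
    · exact (ENNReal.pow_ne_zero (by norm_num) i)
  have hcs : ∀ i, coverSum T s (max N (M i)) ε Z₁ < η i := by
    intro i
    have hle : coverSum T s (max N (M i)) ε Z₁ ≤ coverMeasure T s Z₁ := by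
      refine le_trans (le_iSup (fun m => coverSum T s m ε Z₁) (max N (M i))) ?_
      exact le_iSup₂ (f := fun ε' (_ : (0:ℝ) < ε') => coverMeasureEps T s ε' Z₁) ε hε
    rw [h1] at hle
    exact lt_of_le_of_lt (le_antisymm hle zero_le).le (hηpos i)
  have hFex : ∀ i, ∃ F : Set (X × ℕ), ∃ _ : F.Countable,
      ∃ _ : (∀ p ∈ F, max N (M i) ≤ p.2), ∃ _ : Z₁ ⊆ ⋃ p ∈ F, bowenBall T p.2 p.1 ε,
      ∑' p : F, ENNReal.ofReal (Real.exp (-s * ((p : X × ℕ).2 : ℝ))) < η i := by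
    intro i
    have := hcs i
    rw [coverSum] at this
    simpa only [iInf_lt_iff] using this
  choose F hFc hFN hFcov hFsum using hFex
  -- the product cover
  set G : ℕ → Set ((X × X) × ℕ) := fun i =>
    ⋃ p ∈ F i, ↑((E i p.2).image fun y => ((p.1, y), p.2)) with hG
  set Ftot : Set ((X × X) × ℕ) := ⋃ i, G i with hFtot
  have hGc : ∀ i, (G i).Countable :=
    fun i => (hFc i).biUnion fun p _ => ((E i p.2).image _).countable_toSet
  have hFtotc : Ftot.Countable := countable_iUnion hGc
  have hFtotN : ∀ q ∈ Ftot, N ≤ q.2 := by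
    intro q hq
    simp only [hFtot, hG, Set.mem_iUnion, Finset.coe_image, Set.mem_image,
      Finset.mem_coe] at hq
    obtain ⟨i, p, hp, y, hy, rfl⟩ := hq
    exact le_trans (le_max_left _ _) (hFN i p hp)
  have hFtotcov : Z₁ ×ˢ Z₂ ⊆ ⋃ q ∈ Ftot, bowenBall (Prod.map T T) q.2 q.1 ε := by
    rintro ⟨a, b⟩ ⟨ha, hb⟩
    obtain ⟨i, hbi⟩ : ∃ i, b ∈ Zs i := by
      have := hZs hb
      simpa only [Set.mem_iUnion] using this
    obtain ⟨p, hp, hap⟩ : ∃ p ∈ F i, a ∈ bowenBall T p.2 p.1 ε := by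
      have := hFcov i ha
      simpa only [Set.mem_iUnion, exists_prop] using this
    have hMn : M i ≤ p.2 := le_trans (le_max_right _ _) (hFN i p hp)
    obtain ⟨hEsub, hEcov, hEcard⟩ := hE i p.2 hMn
    obtain ⟨y, hy, hby⟩ : ∃ y ∈ E i p.2, b ∈ bowenBall T p.2 y ε := by
      have := hEcov hbi
      simpa only [Set.mem_iUnion, exists_prop] using this
    have hmem : ((p.1, y), p.2) ∈ Ftot := by
      simp only [hFtot, hG, Set.mem_iUnion, Finset.coe_image, Set.mem_image, Finset.mem_coe]
      exact ⟨i, p, hp, y, hy, rfl⟩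
    have hball : (a, b) ∈ bowenBall (Prod.map T T) p.2 (p.1, y) ε := by
      rw [bowenBall_prod]
      exact ⟨hap, hby⟩
    exact Set.mem_biUnion hmem hball
  -- bound the sum
  have hbound : ∑' q : Ftot, ENNReal.ofReal (Real.exp (-(s + t) * ((q : (X × X) × ℕ).2 : ℝ)))
      ≤ (δ : ℝ≥0∞) := by
    calc ∑' q : Ftot, ENNReal.ofReal (Real.exp (-(s + t) * ((q : (X × X) × ℕ).2 : ℝ)))
        ≤ ∑' i, ∑' q : G i, ENNReal.ofReal (Real.exp (-(s + t) * ((q : (X × X) × ℕ).2 : ℝ))) := by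
          rw [hFtot]
          exact ENNReal.tsum_iUnion_le_tsum
            (fun q : (X × X) × ℕ => ENNReal.ofReal (Real.exp (-(s + t) * (q.2 : ℝ)))) G
      _ ≤ ∑' i, η i := ENNReal.tsum_le_tsum fun i => ?_
      _ ≤ (δ : ℝ≥0∞) := ?_
    · -- per-i bound
      have hper : ∀ p ∈ F i, ∑' q : (((E i (p : X × ℕ).2).image
            fun y => (((p : X × ℕ).1, y), (p : X × ℕ).2) : Finset ((X × X) × ℕ)) :
              Set ((X × X) × ℕ)),
          ENNReal.ofReal (Real.exp (-(s + t) * ((q : (X × X) × ℕ).2 : ℝ)))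
          ≤ ENNReal.ofReal (Real.exp (-s * ((p : X × ℕ).2 : ℝ))) := by
        intro p hp
        have hMn : M i ≤ p.2 := le_trans (le_max_right _ _) (hFN i p hp)
        obtain ⟨hEsub, hEcov, hEcard⟩ := hE i p.2 hMn
        have hinj : Set.InjOn (fun y : X => ((p.1, y), p.2)) ↑(E i p.2) := by
          intro a _ b _ h
          exact congrArg (fun q : (X × X) × ℕ => q.1.2) h
        have hconst : ∀ q ∈ (E i p.2).image fun y => ((p.1, y), p.2),
            (fun q : (X × X) × ℕ => ENNReal.ofReal (Real.exp (-(s + t) * (q.2 : ℝ)))) q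
              = ENNReal.ofReal (Real.exp (-(s + t) * ((p.2 : ℕ) : ℝ))) := by
          intro q hq
          simp only [Finset.mem_image] at hq
          obtain ⟨y, hy, rfl⟩ := hq
          rfl
        rw [tsum_finset_coe_eq ((E i p.2).image fun y => ((p.1, y), p.2)) _ _ hconst,
          Finset.card_image_of_injOn hinj]
        have hsplit : Real.exp (-(s + t) * (p.2 : ℝ))
            = Real.exp (-t * (p.2 : ℝ)) * Real.exp (-s * (p.2 : ℝ)) := by
          rw [← Real.exp_add]; ring_nf
        rw [hsplit, ENNReal.ofReal_mul (Real.exp_pos _).le, ← mul_assoc]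
        calc ((E i p.2).card : ℝ≥0∞) * ENNReal.ofReal (Real.exp (-t * (p.2 : ℝ)))
              * ENNReal.ofReal (Real.exp (-s * (p.2 : ℝ)))
            ≤ 1 * ENNReal.ofReal (Real.exp (-s * (p.2 : ℝ))) :=
              mul_le_mul_left hEcard _
          _ = ENNReal.ofReal (Real.exp (-s * (p.2 : ℝ))) := one_mul _
      calc ∑' q : G i, ENNReal.ofReal (Real.exp (-(s + t) * ((q : (X × X) × ℕ).2 : ℝ)))
          ≤ ∑' p : F i, ∑' q : (((E i (p : X × ℕ).2).image
              fun y => (((p : X × ℕ).1, y), (p : X × ℕ).2) : Finset ((X × X) × ℕ)) :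
                Set ((X × X) × ℕ)),
              ENNReal.ofReal (Real.exp (-(s + t) * ((q : (X × X) × ℕ).2 : ℝ))) := by
            rw [hG]
            exact ENNReal.tsum_biUnion_le_tsum
              (fun q : (X × X) × ℕ => ENNReal.ofReal (Real.exp (-(s + t) * (q.2 : ℝ)))) (F i)
              (fun p => ↑((E i p.2).image fun y => ((p.1, y), p.2)))
        _ ≤ ∑' p : F i, ENNReal.ofReal (Real.exp (-s * ((p : X × ℕ).2 : ℝ))) :=
            ENNReal.tsum_le_tsum fun p => hper p.1 p.2
        _ ≤ η i := (hFsum i).le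
    · -- geometric series
      rw [hη]
      rw [ENNReal.tsum_mul_left, ENNReal.tsum_geometric]
      have : (1 - 2⁻¹ : ℝ≥0∞)⁻¹ = 2 := by
        rw [ENNReal.one_sub_inv_two, inv_inv]
      rw [this, ENNReal.div_mul_cancel (by norm_num) (by norm_num)]
  refine le_trans ?_ hbound
  exact iInf_le_of_le Ftot (iInf_le_of_le hFtotc (iInf_le_of_le hFtotN
    (iInf_le_of_le hFtotcov le_rfl)))
lemma coverMeasure_zero_of_lt (T : X → X) (Z : Set X) {c : ℝ≥0}
    (h : bowenEntropy T Z < (c : ℝ≥0∞)) : coverMeasure T (c : ℝ) Z = 0 := by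
  rw [bowenEntropy] at h
  simp only [iInf_lt_iff] at h
  obtain ⟨u, hu0, hu⟩ := h
  have huc : (u : ℝ) ≤ (c : ℝ) := by exact_mod_cast hu.le
  exact le_antisymm ((coverMeasure_anti T huc Z).trans hu0.le) zero_le

lemma packingMeasureEps_zero_of_lt (T : X → X) (Z : Set X) {c : ℝ≥0} {ε : ℝ} (hε : 0 < ε)
    (h : packingEntropy T Z < (c : ℝ≥0∞)) : packingMeasureEps T (c : ℝ) ε Z = 0 := by
  have h1 : packingEntropyEps T ε Z < (c : ℝ≥0∞) :=
    lt_of_le_of_lt (le_iSup₂ (f := fun ε' (_ : (0:ℝ) < ε') => packingEntropyEps T ε' Z) ε hε) h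
  rw [packingEntropyEps] at h1
  simp only [iInf_lt_iff] at h1
  obtain ⟨u, hu0, hu⟩ := h1
  have huc : (u : ℝ) ≤ (c : ℝ) := by exact_mod_cast hu.le
  exact le_antisymm ((packingMeasureEps_anti T huc ε Z).trans hu0.le) zero_le

end BowenProduct

/-- Upper bound for Bowen entropy of a product via packing entropy (main theorem, part 2):
`h^B(Z_1 × Z_2) ≤ h^B(Z_1) + h^P(Z_2)`, the product being taken in the product system
`(X × X, ρ, T × T)` with `ρ` the max product metric. -/
theorem BowenProduct.bowenEntropy_prod_le_add_packing {X : Type*} [MetricSpace X]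
    [CompactSpace X] (T : X → X) (hT : Continuous T) (Z₁ Z₂ : Set X) :
    BowenProduct.bowenEntropy (Prod.map T T) (Z₁ ×ˢ Z₂) ≤
      BowenProduct.bowenEntropy T Z₁ + BowenProduct.packingEntropy T Z₂ := by
  refine ENNReal.le_of_forall_pos_le_add fun δ hδ hfin => ?_
  have hA : bowenEntropy T Z₁ ≠ ∞ := (lt_of_le_of_lt le_self_add hfin).ne
  have hB : packingEntropy T Z₂ ≠ ∞ := (lt_of_le_of_lt le_add_self hfin).ne
  set s : ℝ≥0 := (bowenEntropy T Z₁).toNNReal + δ / 2 with hs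
  set t : ℝ≥0 := (packingEntropy T Z₂).toNNReal + δ / 2 with ht
  have hδ2 : (0 : ℝ≥0∞) < ((δ / 2 : ℝ≥0) : ℝ≥0∞) := by
    exact_mod_cast (half_pos hδ)
  have hAs : bowenEntropy T Z₁ < (s : ℝ≥0∞) := by
    rw [hs, ENNReal.coe_add, ENNReal.coe_toNNReal hA]
    exact ENNReal.lt_add_right hA hδ2.ne'
  have hBt : packingEntropy T Z₂ < (t : ℝ≥0∞) := by
    rw [ht, ENNReal.coe_add, ENNReal.coe_toNNReal hB]
    exact ENNReal.lt_add_right hB hδ2.ne'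
  have hcm : coverMeasure T (s : ℝ) Z₁ = 0 := coverMeasure_zero_of_lt T Z₁ hAs
  have hprod : coverMeasure (Prod.map T T) ((s + t : ℝ≥0) : ℝ) (Z₁ ×ˢ Z₂) = 0 := by
    refine le_antisymm ?_ zero_le
    refine iSup₂_le fun ε hε => ?_
    refine iSup_le fun N => ?_
    have hpm : packingMeasureEps T (t : ℝ) (ε / 4) Z₂ = 0 :=
      packingMeasureEps_zero_of_lt T Z₂ (by positivity) hBt
    have := coverSum_prod_eq_zero T (s : ℝ) (t : ℝ) hε Z₁ Z₂ hcm hpm N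
    rw [show ((s + t : ℝ≥0) : ℝ) = (s : ℝ) + (t : ℝ) by push_cast; ring]
    exact this.le
  have hle : bowenEntropy (Prod.map T T) (Z₁ ×ˢ Z₂) ≤ ((s + t : ℝ≥0) : ℝ≥0∞) :=
    iInf₂_le (s + t) hprod
  refine hle.trans ?_
  have : ((s + t : ℝ≥0) : ℝ≥0∞)
      = bowenEntropy T Z₁ + packingEntropy T Z₂ + ((δ / 2 + δ / 2 : ℝ≥0) : ℝ≥0∞) := by
    rw [hs, ht]
    push_cast
    rw [ENNReal.coe_toNNReal hA, ENNReal.coe_toNNReal hB]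
    ring
  rw [this, add_halves]
end
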